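/- Let 𝒳 be a vector space over ℝ whose dimension ℵ (the cardinality of a Hamel basis) is infinite, and let 𝔠 denote the cardinality of ℝ. Then there exists a family (f_i)_{i ∈ I} of norms on 𝒳, indexed by a set I of cardinality 2^ℵ · 𝔠, which is pairwise orderly independent: for all distinct i, j ∈ I, inf{f_i(x)/f_j(x) : x ∈ 𝒳, x ≠ 0} = 0 and inf{f_j(x)/f_i(x) : x ∈ 𝒳, x ≠ 0} = 0. Equivalently, 𝒳 admits at least 2^ℵ · 𝔠 many pairwise totally non-equivalent norms. -/

import Mathlib

universe v

/-- A norm on a real vector space `𝒳`. -/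
def IsNorm {𝒳 : Type*} [AddCommGroup 𝒳] [Module ℝ 𝒳] (f : 𝒳 → ℝ) : Prop :=
  (∀ x, 0 ≤ f x) ∧ (∀ x, f x = 0 ↔ x = 0) ∧
  (∀ (α : ℝ) (x : 𝒳), f (α • x) = |α| * f x) ∧
  (∀ x y, f (x + y) ≤ f x + f y)

section Aux

variable {ι : Type*} {𝒳 : Type*} [AddCommGroup 𝒳] [Module ℝ 𝒳]

/-- Weighted ℓ¹-style norm associated to a basis and a weight function. -/
noncomputable def wnorm (B : Module.Basis ι ℝ 𝒳) (w : ι → ℝ) (x : 𝒳) : ℝ :=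
  (B.repr x).sum fun i a => w i * |a|

lemma wnorm_nonneg (B : Module.Basis ι ℝ 𝒳) (w : ι → ℝ) (hw : ∀ i, 0 < w i) (x : 𝒳) :
    0 ≤ wnorm B w x := by
  refine Finset.sum_nonneg fun i _ => ?_
  exact mul_nonneg (hw i).le (abs_nonneg _)

lemma wnorm_basis (B : Module.Basis ι ℝ 𝒳) (w : ι → ℝ) (i : ι) :
    wnorm B w (B i) = w i := by
  simp [wnorm, Finsupp.sum_single_index]

lemma wnorm_isNorm (B : Module.Basis ι ℝ 𝒳) (w : ι → ℝ) (hw : ∀ i, 0 < w i) :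
    IsNorm (wnorm B w) := by
  classical
  refine ⟨wnorm_nonneg B w hw, ?_, ?_, ?_⟩
  · intro x
    constructor
    · intro h
      by_contra hx
      have hsupp : (B.repr x).support.Nonempty := by
        rw [Finsupp.support_nonempty_iff]
        simpa using fun h0 => hx (by simpa using B.repr.injective (by simpa using h0))
      obtain ⟨i, hi⟩ := hsupp
      have hpos : 0 < w i * |B.repr x i| :=
        mul_pos (hw i) (abs_pos.mpr (Finsupp.mem_support_iff.mp hi))
      have := Finset.sum_eq_zero_iff_of_nonneg
        (fun j (_ : j ∈ (B.repr x).support) => mul_nonneg (hw j).le (abs_nonneg _)) |>.mp h i hi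
      exact absurd this hpos.ne'
    · rintro rfl
      simp [wnorm]
  · intro α x
    have hrepr : B.repr (α • x) = α • B.repr x := by simp
    have hsub : (B.repr (α • x)).support ⊆ (B.repr x).support := by
      rw [hrepr]; exact Finsupp.support_smul
    rw [wnorm, Finsupp.sum_of_support_subset _ hsub _ (by simp), wnorm, Finsupp.sum,
      Finset.mul_sum]
    refine Finset.sum_congr rfl fun i _ => ?_
    rw [hrepr]
    simp [Finsupp.smul_apply, abs_mul]
    ring
  · intro x y
    have hxy : B.repr (x + y) = B.repr x + B.repr y := by simp
    set s := (B.repr x).support ∪ (B.repr y).support with hs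
    have h1 : (B.repr (x + y)).support ⊆ s := by
      rw [hxy]; exact Finsupp.support_add
    have h2 : (B.repr x).support ⊆ s := Finset.subset_union_left
    have h3 : (B.repr y).support ⊆ s := Finset.subset_union_right
    rw [wnorm, wnorm, wnorm, Finsupp.sum_of_support_subset _ h1 _ (by simp),
      Finsupp.sum_of_support_subset _ h2 _ (by simp),
      Finsupp.sum_of_support_subset _ h3 _ (by simp), ← Finset.sum_add_distrib]
    refine Finset.sum_le_sum fun i _ => ?_
    rw [hxy]
    calc w i * |(B.repr x + B.repr y) i| ≤ w i * (|B.repr x i| + |B.repr y i|) := by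
          refine mul_le_mul_of_nonneg_left ?_ (hw i).le
          simpa using abs_add_le (B.repr x i) (B.repr y i)
      _ = w i * |B.repr x i| + w i * |B.repr y i| := by ring

end Aux

/-- if `𝒳` is a real vector space of infinite dimension `ℵ`,
then there is a family of `2^ℵ · 𝔠` norms on `𝒳` (here realized as a set `S`
of norms of that cardinality) which is pairwise orderly independent, i.e. for
distinct `f, g ∈ S` one has `inf{f(x)/g(x) : x ≠ 0} = 0` and
`inf{g(x)/f(x) : x ≠ 0} = 0` — equivalently, `𝒳` admits at least `2^ℵ · 𝔠`
pairwise totally non-equivalent norms. -/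
theorem many_orderly_independent_norms {𝒳 : Type v} [AddCommGroup 𝒳]
    [Module ℝ 𝒳] (hdim : Cardinal.aleph0 ≤ Module.rank ℝ 𝒳) :
    ∃ S : Set (𝒳 → ℝ),
      Cardinal.mk S = 2 ^ Module.rank ℝ 𝒳 * Cardinal.continuum ∧
      (∀ f ∈ S, IsNorm f) ∧
      (∀ f ∈ S, ∀ g ∈ S, f ≠ g →
        (∀ ε > 0, ∃ x : 𝒳, x ≠ 0 ∧ f x / g x < ε) ∧
        (∀ ε > 0, ∃ x : 𝒳, x ≠ 0 ∧ g x / f x < ε)) := by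
  classical
  set ι := Module.Free.ChooseBasisIndex ℝ 𝒳 with hι
  let B : Module.Basis ι ℝ 𝒳 := Module.Free.chooseBasis ℝ 𝒳
  have hrank : Cardinal.mk ι = Module.rank ℝ 𝒳 := B.mk_eq_rank''
  have hιinf : Cardinal.aleph0 ≤ Cardinal.mk ι := hrank ▸ hdim
  -- an equivalence ι ≃ (ι × Bool) × ℕ
  have hcard : Cardinal.mk ((ι × Bool) × ℕ) = Cardinal.mk ι := by
    have h1 : Cardinal.mk (ι × Bool) = Cardinal.mk ι := by
      rw [Cardinal.mk_prod]
      simp only [Cardinal.mk_bool, Cardinal.lift_id', Cardinal.lift_ofNat]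
      exact Cardinal.mul_eq_left hιinf
        (le_trans (by exact_mod_cast (Cardinal.nat_lt_aleph0 2).le) hιinf) two_ne_zero
    rw [Cardinal.mk_prod, h1]
    simp only [Cardinal.mk_nat, Cardinal.lift_id', Cardinal.lift_aleph0]
    exact Cardinal.mul_eq_left hιinf hιinf Cardinal.aleph0_ne_zero
  obtain ⟨e⟩ := Cardinal.eq.mp hcard.symm
  -- the weights
  let w : Set ι → ι → ℝ := fun S i =>
    (2 : ℝ) ^ (if ((e i).1.1 ∈ S ↔ (e i).1.2 = false) then ((e i).2 : ℤ) else -((e i).2 : ℤ))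
  have hwpos : ∀ S i, 0 < w S i := fun S i => zpow_pos (by norm_num) _
  let F : Set ι → 𝒳 → ℝ := fun S => wnorm B (w S)
  have hFnorm : ∀ S, IsNorm (F S) := fun S => wnorm_isNorm B (w S) (hwpos S)
  -- value at special basis vectors
  have hFval : ∀ (S : Set ι) (b : ι) (c : Bool) (n : ℕ),
      F S (B (e.symm ((b, c), n))) =
        (2 : ℝ) ^ (if (b ∈ S ↔ c = false) then (n : ℤ) else -(n : ℤ)) := by
    intro S b c n
    rw [show F S (B (e.symm ((b, c), n))) = w S (e.symm ((b, c), n)) from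
      wnorm_basis B (w S) _]
    simp [w]
  -- key estimate
  have key : ∀ (S T : Set ι) (b : ι), b ∈ S → b ∉ T → ∀ ε : ℝ, 0 < ε →
      (∃ x : 𝒳, x ≠ 0 ∧ F T x / F S x < ε) ∧ (∃ x : 𝒳, x ≠ 0 ∧ F S x / F T x < ε) := by
    intro S T b hbS hbT ε hε
    obtain ⟨n, hn⟩ := exists_pow_lt_of_lt_one hε (by norm_num : (1 : ℝ) / 2 < 1)
    have hbound : ((2 : ℝ) ^ (-(n : ℤ))) / ((2 : ℝ) ^ (n : ℤ)) < ε := by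
      have h1 : ((2 : ℝ) ^ (-(n : ℤ))) / ((2 : ℝ) ^ (n : ℤ)) ≤ (2 : ℝ) ^ (-(n : ℤ)) := by
        apply div_le_self (zpow_pos (by norm_num) _).le
        exact one_le_zpow₀ (by norm_num) (by positivity)
      have h2 : ((2 : ℝ) ^ (-(n : ℤ))) = (1 / 2 : ℝ) ^ n := by
        rw [zpow_neg, one_div, inv_pow, zpow_natCast]
      linarith [h1, h2 ▸ hn]
    constructor
    · refine ⟨B (e.symm ((b, false), n)), B.ne_zero _, ?_⟩
      rw [hFval, hFval]
      simp only [hbS, hbT, iff_true, iff_false]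
      norm_num
      convert hbound using 3 <;> simp
    · refine ⟨B (e.symm ((b, true), n)), B.ne_zero _, ?_⟩
      rw [hFval, hFval]
      simp only [hbS, hbT, iff_true, iff_false]
      norm_num
      convert hbound using 3 <;> simp
  -- injectivity of F
  have hFinj : Function.Injective F := by
    intro S T hST
    ext b
    by_contra hb
    rw [iff_iff_implies_and_implies, not_and_or] at hb
    rcases hb with hb | hb
    · push_neg at hb
      obtain ⟨hbS, hbT⟩ := hb
      have := congrFun hST (B (e.symm ((b, false), 1)))
      rw [hFval, hFval] at this
      simp only [hbS, hbT, iff_true, iff_false, if_true, if_false] at this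
      norm_num at this
    · push_neg at hb
      obtain ⟨hbT, hbS⟩ := hb
      have := congrFun hST (B (e.symm ((b, false), 1)))
      rw [hFval, hFval] at this
      simp only [hbS, hbT, iff_true, iff_false, if_true, if_false] at this
      norm_num at this
  refine ⟨Set.range F, ?_, ?_, ?_⟩
  · rw [Cardinal.mk_range_eq _ hFinj, Cardinal.mk_set, hrank]
    have h𝔠 : Cardinal.continuum ≤ 2 ^ Module.rank ℝ 𝒳 := by
      rw [← Cardinal.two_power_aleph0]
      exact Cardinal.power_le_power_left two_ne_zero hdim
    have hbig : Cardinal.aleph0 ≤ 2 ^ Module.rank ℝ 𝒳 :=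
      le_trans Cardinal.aleph0_le_continuum h𝔠
    exact (Cardinal.mul_eq_left hbig h𝔠 Cardinal.continuum_ne_zero).symm
  · rintro f ⟨S, rfl⟩
    exact hFnorm S
  · rintro f ⟨S, rfl⟩ g ⟨T, rfl⟩ hfg
    have hST : S ≠ T := fun h => hfg (congrArg F h)
    have : (∃ b, b ∈ S ∧ b ∉ T) ∨ (∃ b, b ∈ T ∧ b ∉ S) := by
      by_contra h
      push_neg at h
      exact hST (Set.eq_of_subset_of_subset (fun b hb => h.1 b hb) (fun b hb => h.2 b hb))
    rcases this with ⟨b, hbS, hbT⟩ | ⟨b, hbT, hbS⟩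
    · exact ⟨fun ε hε => (key S T b hbS hbT ε hε).2, fun ε hε => (key S T b hbS hbT ε hε).1⟩
    · exact ⟨fun ε hε => (key T S b hbT hbS ε hε).1, fun ε hε => (key T S b hbT hbS ε hε).2⟩
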